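/- For every integer n ≥ 3, the (2,2) broadcast domination number of the 3×n grid graph satisfies γ_{2,2}(G_{3,n}) = ⌈4n/3⌉. -/

import Mathlib

open Classical in
/-- The reception strength at vertex `u` from a set `S` of broadcasting vertices of
transmission strength `t`: the sum of `t - d(u,v)` over all `v ∈ S` with `d(u,v) < t`. -/
noncomputable def reception {V : Type*} (G : SimpleGraph V) (t : ℕ) (S : Finset V) (u : V) : ℕ∞ :=
  ∑ v ∈ S.filter (fun v => G.edist u v < (t : ℕ∞)), ((t : ℕ∞) - G.edist u v)

/-- `S` is a `(t,r)` broadcast dominating set of `G`. -/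
def IsBroadcastDominating {V : Type*} (G : SimpleGraph V) (t r : ℕ) (S : Finset V) : Prop :=
  ∀ u, (r : ℕ∞) ≤ reception G t S u

/-- The `(t,r)` broadcast domination number of a finite graph `G`. -/
noncomputable def broadcastDomNum {V : Type*} [Fintype V] (G : SimpleGraph V) (t r : ℕ) : ℕ :=
  sInf {k | ∃ S : Finset V, IsBroadcastDominating G t r S ∧ S.card = k}

/-- The `m × n` grid graph: vertices are pairs, adjacent iff at ℓ1-distance 1. -/
def gridGraph (m n : ℕ) : SimpleGraph (Fin m × Fin n) where
  Adj p q := Nat.dist p.1.val q.1.val + Nat.dist p.2.val q.2.val = 1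
  symm := by
    constructor
    intro p q h
    show Nat.dist q.1.val p.1.val + Nat.dist q.2.val p.2.val = 1
    rw [Nat.dist_comm q.1.val p.1.val, Nat.dist_comm q.2.val p.2.val]
    exact h
  loopless := by
    constructor
    intro p h
    simp only [Nat.dist_self, Nat.add_zero] at h
    exact absurd h (by norm_num)

namespace BD

/-! ### Generic facts about reception with t = 2 -/

lemma enat_lt_two {e : ℕ∞} : e < 2 ↔ e = 0 ∨ e = 1 := by
  induction e using ENat.recTopCoe with
  | top => simp
  | coe n =>
    rw [show (2:ℕ∞) = ((2:ℕ):ℕ∞) from rfl, Nat.cast_lt]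
    simp only [Nat.cast_eq_zero, Nat.cast_eq_one]
    omega

lemma reception_two {V : Type*} [DecidableEq V] (G : SimpleGraph V) [DecidableRel G.Adj]
    (S : Finset V) (u : V) :
    reception G 2 S u = (if u ∈ S then 2 else 0)
      + ((S.filter (fun v => G.Adj u v)).card : ℕ∞) := by
  unfold reception
  rw [Finset.sum_filter]
  have key : ∀ v ∈ S, (if G.edist u v < ((2:ℕ) : ℕ∞) then ((2:ℕ):ℕ∞) - G.edist u v else 0)
      = (if v = u then (2:ℕ∞) else 0) + (if G.Adj u v then (1:ℕ∞) else 0) := by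
    intro v _
    by_cases h1 : v = u
    · subst h1
      rw [if_pos rfl, if_neg (G.irrefl), if_pos]
      · rw [SimpleGraph.edist_self]; rfl
      · rw [SimpleGraph.edist_self]; decide
    · by_cases h2 : G.Adj u v
      · have he : G.edist u v = 1 := SimpleGraph.edist_eq_one_iff_adj.mpr h2
        rw [if_neg h1, if_pos h2, if_pos (by rw [he]; decide), he]
        rfl
      · have hlt : ¬ (G.edist u v < ((2:ℕ):ℕ∞)) := by
          rw [show ((2:ℕ):ℕ∞) = (2:ℕ∞) from rfl, enat_lt_two]
          push_neg
          constructor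
          · intro h; exact h1 (SimpleGraph.edist_eq_zero_iff.mp h).symm
          · intro h; exact h2 (SimpleGraph.edist_eq_one_iff_adj.mp h)
        rw [if_neg hlt, if_neg h1, if_neg h2, add_zero]
  rw [Finset.sum_congr rfl key, Finset.sum_add_distrib]
  congr 1
  · rw [Finset.sum_ite_eq' S u (fun _ => (2:ℕ∞))]
  · rw [Finset.sum_boole]

lemma dom_iff {V : Type*} [DecidableEq V] (G : SimpleGraph V) [DecidableRel G.Adj]
    (S : Finset V) :
    IsBroadcastDominating G 2 2 S ↔
      ∀ u, u ∈ S ∨ 2 ≤ (S.filter (fun v => G.Adj u v)).card := by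
  unfold IsBroadcastDominating
  apply forall_congr'
  intro u
  rw [reception_two]
  by_cases hu : u ∈ S
  · simp only [hu, if_pos, true_or, iff_true]
    exact le_add_right (by norm_num)
  · simp only [hu, if_neg, not_false_iff, zero_add, false_or]
    rw [show ((2:ℕ):ℕ∞) = (2:ℕ∞) from rfl]
    exact_mod_cast Iff.rfl

/-! ### Column masks -/

def colOK (a b c : ℕ) : Prop :=
  (b % 2 = 1 ∨ 2 ≤ a % 2 + c % 2 + b / 2 % 2) ∧
  (b / 2 % 2 = 1 ∨ 2 ≤ a / 2 % 2 + c / 2 % 2 + b % 2 + b / 4 % 2) ∧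
  (b / 4 % 2 = 1 ∨ 2 ≤ a / 4 % 2 + c / 4 % 2 + b / 2 % 2)

instance (a b c : ℕ) : Decidable (colOK a b c) := by unfold colOK; infer_instance

def pcnt (m : ℕ) : ℕ := m % 2 + m / 2 % 2 + m / 4 % 2

def PhiT (a b : ℕ) : ℕ :=
  (([[5,5,2,1,5,0,1,0],[5,5,2,1,3,0,1,0],[5,5,2,1,5,0,1,0],[5,5,2,1,2,0,1,0],
     [5,3,2,1,5,0,1,0],[5,3,1,1,3,0,1,0],[5,2,2,1,5,0,1,0],[5,2,1,1,2,0,1,0]] :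
     List (List ℕ)).getD a []).getD b 0

lemma L1 : ∀ a b c : Fin 8, colOK a.val b.val c.val →
    4 + PhiT a.val b.val ≤ 3 * pcnt c.val + PhiT b.val c.val := by decide

lemma L2 : ∀ b c : Fin 8, colOK 0 b.val c.val →
    9 ≤ 3 * pcnt b.val + 3 * pcnt c.val + PhiT b.val c.val := by decide

lemma L3 : ∀ a b : Fin 8, colOK a.val b.val 0 → PhiT a.val b.val ≤ 1 := by decide

/-! ### The telescoping chain bound -/

lemma chain (f : ℕ → ℕ) (hf : ∀ j, f j < 8) (h0 : f 0 = 0) (k : ℕ) (hk : 2 ≤ k) :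
    (∀ j, 1 ≤ j → j < k → colOK (f (j-1)) (f j) (f (j+1))) →
      4 * k + 1 ≤ 3 * (∑ j ∈ Finset.Icc 1 k, pcnt (f j)) + PhiT (f (k-1)) (f k) := by
  induction k, hk using Nat.le_induction with
  | base =>
    intro hok
    have h1 := hok 1 le_rfl (by omega)
    rw [h0] at h1
    have h2 := L2 ⟨f 1, hf 1⟩ ⟨f 2, hf 2⟩ h1
    have hs : ∑ j ∈ Finset.Icc 1 2, pcnt (f j) = pcnt (f 1) + pcnt (f 2) := by
      rw [show Finset.Icc 1 2 = {1, 2} from rfl]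
      rw [Finset.sum_insert (by decide), Finset.sum_singleton]
    have h2' : 9 ≤ 3 * pcnt (f 1) + 3 * pcnt (f 2) + PhiT (f 1) (f 2) := h2
    rw [hs, show (2:ℕ) - 1 = 1 from rfl]
    omega
  | succ k hk ih =>
    intro hok
    have h1 := ih (fun j hj hjk => hok j hj (by omega))
    have h2 := L1 ⟨f (k-1), hf _⟩ ⟨f k, hf _⟩ ⟨f (k+1), hf _⟩
      (hok k (by omega) (by omega))
    rw [Finset.sum_Icc_succ_top (by omega : 1 ≤ k + 1)]
    have e : k + 1 - 1 = k := rfl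
    rw [e]
    have h2' : 4 + PhiT (f (k-1)) (f k) ≤ 3 * pcnt (f (k+1)) + PhiT (f k) (f (k+1)) := h2
    omega

lemma chain_main (f : ℕ → ℕ) (hf : ∀ j, f j < 8) (h0 : f 0 = 0) (n : ℕ) (hn : 2 ≤ n)
    (hend : f (n+1) = 0)
    (hok : ∀ j, 1 ≤ j → j ≤ n → colOK (f (j-1)) (f j) (f (j+1))) :
    4 * n ≤ 3 * (∑ j ∈ Finset.Icc 1 n, pcnt (f j)) := by
  have h1 := chain f hf h0 n hn (fun j hj hjk => hok j hj (by omega))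
  have h2 : colOK (f (n-1)) (f n) 0 := by
    have := hok n (by omega) le_rfl
    rwa [hend] at this
  have h3 : PhiT (f (n-1)) (f n) ≤ 1 := L3 ⟨f (n-1), hf _⟩ ⟨f n, hf _⟩ h2
  omega

/-! ### chi counting on the 3×n grid -/

instance (m n : ℕ) : DecidableRel (gridGraph m n).Adj :=
  fun p q => decidable_of_iff
    (Nat.dist p.1.val q.1.val + Nat.dist p.2.val q.2.val = 1) Iff.rfl

variable (n : ℕ) (S : Finset (Fin 3 × Fin n))

def chi (i j : ℕ) : ℕ :=
  (S.filter (fun v => v.1.val + 1 = i ∧ v.2.val + 1 = j)).card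

lemma chi_le_one (i j : ℕ) : chi n S i j ≤ 1 := by
  apply Finset.card_le_one.mpr
  intro a ha b hb
  simp only [Finset.mem_filter] at ha hb
  exact Prod.ext (Fin.ext (by omega)) (Fin.ext (by omega))

lemma chi_row_zero (i j : ℕ) (h : i = 0 ∨ 4 ≤ i) : chi n S i j = 0 := by
  apply Finset.card_eq_zero.mpr
  apply Finset.filter_eq_empty_iff.mpr
  intro v _
  have := v.1.isLt
  omega

lemma chi_col_zero (i j : ℕ) (h : j = 0 ∨ n < j) : chi n S i j = 0 := by
  apply Finset.card_eq_zero.mpr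
  apply Finset.filter_eq_empty_iff.mpr
  intro v _
  have := v.2.isLt
  omega

lemma chi_mem (u : Fin 3 × Fin n) :
    chi n S (u.1.val + 1) (u.2.val + 1) = if u ∈ S then 1 else 0 := by
  unfold chi
  have h : S.filter (fun v => v.1.val + 1 = u.1.val + 1 ∧ v.2.val + 1 = u.2.val + 1)
      = S.filter (fun v => v = u) := by
    apply Finset.filter_congr
    intro v _
    constructor
    · rintro ⟨h1, h2⟩; exact Prod.ext (Fin.ext (by omega)) (Fin.ext (by omega))
    · rintro rfl; exact ⟨rfl, rfl⟩
  rw [h, Finset.filter_eq' S u]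
  split_ifs <;> simp

lemma card_filter_adj (u : Fin 3 × Fin n) :
    (S.filter (fun v => (gridGraph 3 n).Adj u v)).card
      = chi n S u.1.val (u.2.val + 1) + chi n S (u.1.val + 2) (u.2.val + 1)
        + chi n S (u.1.val + 1) u.2.val + chi n S (u.1.val + 1) (u.2.val + 2) := by
  unfold chi
  rw [Finset.card_filter, Finset.card_filter, Finset.card_filter, Finset.card_filter,
    Finset.card_filter, ← Finset.sum_add_distrib, ← Finset.sum_add_distrib,
    ← Finset.sum_add_distrib]
  apply Finset.sum_congr rfl
  intro v _
  have hadj : (gridGraph 3 n).Adj u v ↔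
      (u.1.val - v.1.val) + (v.1.val - u.1.val)
        + ((u.2.val - v.2.val) + (v.2.val - u.2.val)) = 1 := Iff.rfl
  have hu1 := u.1.isLt
  have hv1 := v.1.isLt
  have hu2 := u.2.isLt
  have hv2 := v.2.isLt
  simp only [hadj]
  split_ifs <;> omega

lemma bits_of {a b c : ℕ} (ha : a ≤ 1) (hb : b ≤ 1) (hc : c ≤ 1) :
    (a+2*b+4*c) % 2 = a ∧ (a+2*b+4*c)/2 % 2 = b ∧ (a+2*b+4*c)/4 % 2 = c := by omega

def msk (j : ℕ) : ℕ := chi n S 1 j + 2 * chi n S 2 j + 4 * chi n S 3 j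

lemma msk_lt (j : ℕ) : msk n S j < 8 := by
  have h1 := chi_le_one n S 1 j
  have h2 := chi_le_one n S 2 j
  have h3 := chi_le_one n S 3 j
  unfold msk
  omega

lemma msk_zero (j : ℕ) (h : j = 0 ∨ n < j) : msk n S j = 0 := by
  unfold msk
  rw [chi_col_zero n S 1 j h, chi_col_zero n S 2 j h, chi_col_zero n S 3 j h]

lemma pcnt_msk (j : ℕ) : pcnt (msk n S j) = chi n S 1 j + chi n S 2 j + chi n S 3 j := by
  have h1 := chi_le_one n S 1 j
  have h2 := chi_le_one n S 2 j
  have h3 := chi_le_one n S 3 j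
  unfold pcnt msk
  omega

lemma colOK_iff (J : ℕ) :
    colOK (msk n S (J-1)) (msk n S J) (msk n S (J+1)) ↔
      ((chi n S 1 J = 1 ∨ 2 ≤ chi n S 1 (J-1) + chi n S 1 (J+1) + chi n S 2 J) ∧
       (chi n S 2 J = 1 ∨
         2 ≤ chi n S 2 (J-1) + chi n S 2 (J+1) + chi n S 1 J + chi n S 3 J) ∧
       (chi n S 3 J = 1 ∨ 2 ≤ chi n S 3 (J-1) + chi n S 3 (J+1) + chi n S 2 J)) := by
  have b1 := chi_le_one n S 1 (J-1); have b2 := chi_le_one n S 2 (J-1)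
  have b3 := chi_le_one n S 3 (J-1); have b4 := chi_le_one n S 1 J
  have b5 := chi_le_one n S 2 J; have b6 := chi_le_one n S 3 J
  have b7 := chi_le_one n S 1 (J+1); have b8 := chi_le_one n S 2 (J+1)
  have b9 := chi_le_one n S 3 (J+1)
  obtain ⟨p1, p2, p3⟩ := bits_of b1 b2 b3
  obtain ⟨q1, q2, q3⟩ := bits_of b4 b5 b6
  obtain ⟨r1, r2, r3⟩ := bits_of b7 b8 b9
  unfold colOK msk
  rw [p1, p2, p3, q1, q2, q3, r1, r2, r3]

lemma dom_iff_colOK :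
    IsBroadcastDominating (gridGraph 3 n) 2 2 S ↔
      ∀ J, 1 ≤ J → J ≤ n → colOK (msk n S (J-1)) (msk n S J) (msk n S (J+1)) := by
  rw [dom_iff]
  constructor
  · intro h J hJ1 hJn
    have hv0 : ∀ u : Fin 3 × Fin n,
        chi n S (u.1.val + 1) (u.2.val + 1) = 1 ∨
          2 ≤ chi n S u.1.val (u.2.val + 1) + chi n S (u.1.val + 2) (u.2.val + 1)
            + chi n S (u.1.val + 1) u.2.val + chi n S (u.1.val + 1) (u.2.val + 2) := by
      intro u
      rcases h u with hu | hu
      · left; rw [chi_mem, if_pos hu]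
      · right; rwa [← card_filter_adj]
    have hv : ∀ a : ℕ, a < 3 → ∀ b : ℕ, b < n →
        chi n S (a + 1) (b + 1) = 1 ∨
          2 ≤ chi n S a (b + 1) + chi n S (a + 2) (b + 1)
            + chi n S (a + 1) b + chi n S (a + 1) (b + 2) := by
      intro a ha b hb
      exact hv0 (⟨a, ha⟩, ⟨b, hb⟩)
    have hj : J - 1 < n := by omega
    have e1 : J - 1 + 1 = J := by omega
    have e2 : J - 1 + 2 = J + 1 := by omega
    have h0 := hv 0 (by omega) (J-1) hj
    have h1 := hv 1 (by omega) (J-1) hj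
    have h2 := hv 2 (by omega) (J-1) hj
    rw [e1, e2] at h0 h1 h2
    norm_num at h0 h1 h2
    have z1 := chi_row_zero n S 0 J (Or.inl rfl)
    have z2 := chi_row_zero n S 4 J (Or.inr le_rfl)
    rw [colOK_iff]
    omega
  · intro h u
    have hJ := h (u.2.val + 1) (by omega) (by omega)
    rw [colOK_iff] at hJ
    have e1 : u.2.val + 1 - 1 = u.2.val := rfl
    have e2 : u.2.val + 1 + 1 = u.2.val + 2 := rfl
    rw [e1, e2] at hJ
    by_cases hu : u ∈ S
    · exact Or.inl hu
    · right
      rw [card_filter_adj]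
      have hm := chi_mem n S u
      rw [if_neg hu] at hm
      have z1 := chi_row_zero n S 0 (u.2.val + 1) (Or.inl rfl)
      have z2 := chi_row_zero n S 4 (u.2.val + 1) (Or.inr le_rfl)
      have hi : u.1.val = 0 ∨ u.1.val = 1 ∨ u.1.val = 2 := by omega
      rcases hi with hi | hi | hi <;> rw [hi] at hm ⊢ <;> norm_num at hm ⊢ <;> omega

lemma card_eq : S.card = ∑ J ∈ Finset.Icc 1 n, pcnt (msk n S J) := by
  have : ∀ J ∈ Finset.Icc 1 n, pcnt (msk n S J)
      = ∑ v ∈ S, ((if v.1.val + 1 = 1 ∧ v.2.val + 1 = J then 1 else 0)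
        + (if v.1.val + 1 = 2 ∧ v.2.val + 1 = J then 1 else 0)
        + (if v.1.val + 1 = 3 ∧ v.2.val + 1 = J then 1 else 0)) := by
    intro J _
    rw [pcnt_msk]
    unfold chi
    rw [Finset.card_filter, Finset.card_filter, Finset.card_filter,
      ← Finset.sum_add_distrib, ← Finset.sum_add_distrib]
  rw [Finset.sum_congr rfl this, Finset.sum_comm, Finset.card_eq_sum_ones]
  apply Finset.sum_congr rfl
  intro v _
  have hv1 := v.1.isLt
  have hv2 := v.2.isLt
  rw [Finset.sum_eq_single_of_mem (v.2.val + 1) (by simp [Finset.mem_Icc])]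
  · split_ifs <;> omega
  · intro J _ hne
    split_ifs <;> omega

/-! ### Lower bound -/

lemma lower_bound (hn : 2 ≤ n) (hdom : IsBroadcastDominating (gridGraph 3 n) 2 2 S) :
    4 * n ≤ 3 * S.card := by
  rw [card_eq]
  exact chain_main (msk n S) (msk_lt n S) (msk_zero n S 0 (Or.inl rfl)) n hn
    (msk_zero n S (n+1) (Or.inr (by omega)))
    ((dom_iff_colOK n S).mp hdom)

/-! ### Upper bound construction -/

def t5 (n J : ℕ) : Prop := J + 1 = n ∨ (J + 1 < n ∧ J % 3 = 2)

instance (n J : ℕ) : Decidable (t5 n J) := by unfold t5; infer_instance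

def US (n : ℕ) : Finset (Fin 3 × Fin n) :=
  Finset.univ.filter (fun v => if t5 n (v.2.val + 1) then v.1.val ≠ 1 else v.1.val = 1)

lemma chi_univ_filter (p : Fin 3 × Fin n → Prop) [DecidablePred p] (i J : ℕ)
    (v0 : Fin 3 × Fin n) (hv1 : v0.1.val + 1 = i) (hv2 : v0.2.val + 1 = J) :
    chi n (Finset.univ.filter p) i J = if p v0 then 1 else 0 := by
  unfold chi
  rw [Finset.filter_filter]
  split_ifs with hp
  · rw [Finset.card_eq_one]
    refine ⟨v0, ?_⟩
    rw [Finset.eq_singleton_iff_unique_mem]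
    constructor
    · simp only [Finset.mem_filter, Finset.mem_univ, true_and]
      exact ⟨hp, hv1, hv2⟩
    · intro v hv
      simp only [Finset.mem_filter] at hv
      exact Prod.ext (Fin.ext (by omega)) (Fin.ext (by omega))
  · rw [Finset.card_eq_zero, Finset.filter_eq_empty_iff]
    intro v _
    rintro ⟨hpv, h1, h2⟩
    apply hp
    have hveq : v = v0 := Prod.ext (Fin.ext (by omega)) (Fin.ext (by omega))
    rwa [hveq] at hpv

lemma chi_US (i J : ℕ) (hi1 : 1 ≤ i) (hi3 : i ≤ 3) (hJ1 : 1 ≤ J) (hJn : J ≤ n) :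
    chi n (US n) i J
      = if t5 n J then (if i = 2 then 0 else 1) else (if i = 2 then 1 else 0) := by
  unfold US
  rw [chi_univ_filter n _ i J (⟨i-1, by omega⟩, ⟨J-1, by omega⟩)
    (show i - 1 + 1 = i by omega) (show J - 1 + 1 = J by omega)]
  show (if (if t5 n ((J:ℕ) - 1 + 1) then (i - 1 : ℕ) ≠ 1 else (i - 1 : ℕ) = 1)
      then (1:ℕ) else 0) = _
  rw [show J - 1 + 1 = J from by omega]
  split_ifs <;> omega

lemma msk_US (J : ℕ) (hJ1 : 1 ≤ J) (hJn : J ≤ n) :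
    msk n (US n) J = if t5 n J then 5 else 2 := by
  unfold msk
  rw [chi_US n 1 J (by omega) (by omega) hJ1 hJn,
      chi_US n 2 J (by omega) (by omega) hJ1 hJn,
      chi_US n 3 J (by omega) (by omega) hJ1 hJn]
  split_ifs <;> omega

lemma colOK_US (hn : 3 ≤ n) :
    ∀ J, 1 ≤ J → J ≤ n → colOK (msk n (US n) (J-1)) (msk n (US n) J) (msk n (US n) (J+1)) := by
  intro J h1 h2
  by_cases eJ1 : J = 1
  · subst eJ1
    rw [msk_zero n (US n) 0 (Or.inl rfl), msk_US n 1 (by omega) (by omega),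
      msk_US n 2 (by omega) (by omega)]
    rw [if_neg (by unfold t5; omega), if_pos (by unfold t5; omega)]
    decide
  · by_cases eJn : J = n
    · rw [eJn]
      rw [msk_zero n (US n) (n+1) (Or.inr (by omega)),
        msk_US n (n-1) (by omega) (by omega), msk_US n n (by omega) le_rfl]
      rw [if_pos (show t5 n (n-1) from by unfold t5; omega),
        if_neg (show ¬ t5 n n from by unfold t5; omega)]
      decide
    · rw [msk_US n (J-1) (by omega) (by omega), msk_US n J h1 h2,
        msk_US n (J+1) (by omega) (by omega)]
      have hx1 : 1 < J := by omega
      have hx2 : J < n := by omega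
      have e : J - 1 + 1 = J := by omega
      split_ifs <;> first | decide | (exfalso; unfold t5 at *; omega)

lemma cnt3 (m : ℕ) : ((Finset.Icc 1 m).filter (fun J => J % 3 = 2)).card = (m+1)/3 := by
  induction m with
  | zero => rfl
  | succ m ih =>
    rw [← Finset.insert_Icc_right_eq_Icc_add_one (by omega), Finset.filter_insert]
    split_ifs with h
    · rw [Finset.card_insert_of_notMem (by simp [Finset.mem_Icc])]
      omega
    · omega

lemma card_US (hn : 3 ≤ n) : (US n).card = (4*n+2)/3 := by
  rw [card_eq n (US n)]
  have h1 : ∀ J ∈ Finset.Icc 1 n, pcnt (msk n (US n) J)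
      = 1 + (if t5 n J then 1 else 0) := by
    intro J hJ
    simp only [Finset.mem_Icc] at hJ
    rw [msk_US n J hJ.1 hJ.2]
    split_ifs <;> rfl
  rw [Finset.sum_congr rfl h1, Finset.sum_add_distrib, Finset.sum_const,
    Nat.card_Icc, Finset.sum_boole, Nat.cast_id]
  simp only [smul_eq_mul, mul_one]
  have h2 : (Finset.Icc 1 n).filter (fun J => t5 n J)
      = insert (n-1) ((Finset.Icc 1 (n-2)).filter (fun J => J % 3 = 2)) := by
    ext J
    simp only [Finset.mem_filter, Finset.mem_Icc, Finset.mem_insert]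
    unfold t5
    omega
  rw [h2, Finset.card_insert_of_notMem (by simp [Finset.mem_Icc]; omega), cnt3]
  omega

lemma dom_US (hn : 3 ≤ n) : IsBroadcastDominating (gridGraph 3 n) 2 2 (US n) :=
  (dom_iff_colOK n (US n)).mpr (colOK_US n hn)

end BD

theorem stmt0 (n : ℕ) (hn : 3 ≤ n) :
    (broadcastDomNum (gridGraph 3 n) 2 2 : ℤ) = ⌈(4 * (n : ℚ)) / 3⌉ := by
  have hnum : broadcastDomNum (gridGraph 3 n) 2 2 = (4*n+2)/3 := by
    unfold broadcastDomNum
    apply le_antisymm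
    · exact Nat.sInf_le ⟨BD.US n, BD.dom_US n hn, BD.card_US n hn⟩
    · refine le_csInf ⟨(BD.US n).card, ⟨BD.US n, BD.dom_US n hn, rfl⟩⟩ ?_
      rintro k ⟨S, hS, rfl⟩
      have := BD.lower_bound n S (by omega) hS
      omega
  rw [hnum, eq_comm, Int.ceil_eq_iff]
  have hA : 4 * n ≤ 3 * ((4*n+2)/3) := by omega
  have hB : 3 * ((4*n+2)/3) ≤ 4 * n + 2 := by omega
  have c1 : (4:ℚ) * n ≤ 3 * ((4*n+2)/3 : ℕ) := by exact_mod_cast hA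
  have c2 : (3:ℚ) * ((4*n+2)/3 : ℕ) ≤ 4 * n + 2 := by exact_mod_cast hB
  constructor
  · rw [Int.cast_natCast]
    linarith
  · rw [Int.cast_natCast]
    linarith
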